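/- In the complex-root case Q(x) = A((x-p)² + q²) with q > 0, the function w(x,t) = exp((α₀ p + γ₀) t) · [ q / ( √((x-p)²+q²) · cos(A q t + arctan((x-p)/q)) ) ]^{α₀/A} satisfies ∂w/∂t = A((x-p)²+q²)·∂w/∂x + (α₀ x + γ₀) w with w(x,0)=1, on the region where the cosine is positive. -/

import Mathlib

/-- Complex-root case `Q(x) = A((x-p)² + q²)`: the function
`w(x,t) = exp((α₀ p + γ₀)t) [ q / (√((x-p)²+q²) cos(Aqt + arctan((x-p)/q))) ]^{α₀/A}`
solves `∂w/∂t = A((x-p)²+q²) ∂w/∂x + (α₀ x + γ₀) w` with `w(x,0)=1`,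
on the region where the cosine is positive. -/
theorem stmt_5 (A q α₀ p γ₀ : ℝ) (hA : 0 < A) (hq : 0 < q) (hα : 0 < α₀)
    (w : ℝ → ℝ → ℝ)
    (hw : ∀ x t, w x t
      = Real.exp ((α₀ * p + γ₀) * t)
        * (q / (Real.sqrt ((x - p) ^ 2 + q ^ 2)
            * Real.cos (A * q * t + Real.arctan ((x - p) / q)))) ^ (α₀ / A)) :
    (∀ x t, 0 < Real.cos (A * q * t + Real.arctan ((x - p) / q)) →
        deriv (fun s => w x s) t
          = A * ((x - p) ^ 2 + q ^ 2) * deriv (fun y => w y t) x + (α₀ * x + γ₀) * w x t)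
      ∧ (∀ x, w x 0 = 1) := by
  constructor
  · intro x t hc
    have hX : (0:ℝ) < (x - p) ^ 2 + q ^ 2 := by positivity
    have hS : (0:ℝ) < Real.sqrt ((x - p) ^ 2 + q ^ 2) := Real.sqrt_pos.mpr hX
    have hc0 : Real.cos (A * q * t + Real.arctan ((x - p) / q)) ≠ 0 := ne_of_gt hc
    have hSc : Real.sqrt ((x - p) ^ 2 + q ^ 2)
        * Real.cos (A * q * t + Real.arctan ((x - p) / q)) ≠ 0 :=
      mul_ne_zero (ne_of_gt hS) hc0
    have hB : (0:ℝ) < q / (Real.sqrt ((x - p) ^ 2 + q ^ 2)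
        * Real.cos (A * q * t + Real.arctan ((x - p) / q))) :=
      div_pos hq (mul_pos hS hc)
    -- t-derivative
    have h1 : HasDerivAt (fun s : ℝ => A * q * s + Real.arctan ((x - p) / q))
        (A * q * 1) t := ((hasDerivAt_id t).const_mul (A * q)).add_const _
    have h2 := h1.cos
    have h3 := h2.const_mul (Real.sqrt ((x - p) ^ 2 + q ^ 2))
    have h4 := (hasDerivAt_const t q).div h3 hSc
    have h5 := h4.rpow_const (p := α₀ / A) (Or.inl (ne_of_gt hB))
    have h6 : HasDerivAt (fun s : ℝ => Real.exp ((α₀ * p + γ₀) * s))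
        (Real.exp ((α₀ * p + γ₀) * t) * ((α₀ * p + γ₀) * 1)) t :=
      ((hasDerivAt_id t).const_mul (α₀ * p + γ₀)).exp
    have Ht := h6.mul h5
    -- x-derivative
    have k1 : HasDerivAt (fun y : ℝ => (y - p) ^ 2 + q ^ 2)
        ((2:ℕ) * (x - p) ^ (2 - 1) * 1) x :=
      (((hasDerivAt_id x).sub_const p).pow 2).add_const _
    have k2 := k1.sqrt (ne_of_gt hX)
    have k3 : HasDerivAt (fun y : ℝ => (y - p) / q) (1 / q) x :=
      ((hasDerivAt_id x).sub_const p).div_const q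
    have k4 := ((k3.arctan).const_add (A * q * t)).cos
    have k7 := k2.mul k4
    have k8 := (hasDerivAt_const x q).div k7 hSc
    have k9 := k8.rpow_const (p := α₀ / A) (Or.inl (ne_of_gt hB))
    have Hx := k9.const_mul (Real.exp ((α₀ * p + γ₀) * t))
    simp only [Pi.div_def, Pi.mul_def] at Ht Hx
    have hfun_t : (fun s => w x s)
        = (fun s => Real.exp ((α₀ * p + γ₀) * s)
          * (q / (Real.sqrt ((x - p) ^ 2 + q ^ 2)
            * Real.cos (A * q * s + Real.arctan ((x - p) / q)))) ^ (α₀ / A)) :=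
      funext fun s => hw x s
    have hfun_x : (fun y => w y t)
        = (fun y => Real.exp ((α₀ * p + γ₀) * t)
          * (q / (Real.sqrt ((y - p) ^ 2 + q ^ 2)
            * Real.cos (A * q * t + Real.arctan ((y - p) / q)))) ^ (α₀ / A)) :=
      funext fun y => hw y t
    rw [hfun_t, hfun_x, Ht.deriv, Hx.deriv, hw x t]
    rw [Real.rpow_sub hB, Real.rpow_one]
    have hS2 : (x - p) ^ 2 + q ^ 2 = Real.sqrt ((x - p) ^ 2 + q ^ 2) ^ 2 :=
      (Real.sq_sqrt hX.le).symm
    have haux : 1 + ((x - p) / q) ^ 2 = Real.sqrt ((x - p) ^ 2 + q ^ 2) ^ 2 / q ^ 2 := by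
      rw [← hS2]; field_simp; ring
    set S := Real.sqrt ((x - p) ^ 2 + q ^ 2) with hSdef
    rw [haux, hS2]
    have hc' : Real.cos (A * q * t + Real.arctan ((x - p) / q)) ≠ 0 := hc0
    set c := Real.cos (A * q * t + Real.arctan ((x - p) / q)) with hcdef
    set s := Real.sin (A * q * t + Real.arctan ((x - p) / q)) with hsdef
    set P := (q / (S * c)) ^ (α₀ / A) with hPdef
    have hSne : S ≠ 0 := ne_of_gt hS
    field_simp
    ring
  · intro x
    have hX : (0:ℝ) < (x - p) ^ 2 + q ^ 2 := by positivity
    have hS : (0:ℝ) < Real.sqrt ((x - p) ^ 2 + q ^ 2) := Real.sqrt_pos.mpr hX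
    have h1 : Real.sqrt (1 + ((x - p) / q) ^ 2)
        = Real.sqrt ((x - p) ^ 2 + q ^ 2) / q := by
      have : 1 + ((x - p) / q) ^ 2 = ((x - p) ^ 2 + q ^ 2) / q ^ 2 := by
        field_simp
        ring
      rw [this, Real.sqrt_div hX.le, Real.sqrt_sq hq.le]
    rw [hw x 0]
    rw [mul_zero, mul_zero, Real.exp_zero, zero_add, Real.cos_arctan, h1]
    rw [show Real.sqrt ((x - p) ^ 2 + q ^ 2)
        * (1 / (Real.sqrt ((x - p) ^ 2 + q ^ 2) / q)) = q by
      field_simp]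
    rw [div_self (ne_of_gt hq), Real.one_rpow, one_mul]
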